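/- Let J ≥ 1, let B₀ = 0 < B₁ < ⋯ < B_J be real numbers, and let b₀, …, b_J be complex numbers with b₀ ≠ 0 and b_J ≠ 0. Then the exponential sum Φ(ρ) = ∑_{j=0}^{J} b_j e^{ρ B_j} has infinitely many zeros in the complex plane (hence a stratified N-layer medium has infinitely many natural modes). -/

import Mathlib

open Complex Finset Filter Topology Metric Set
open scoped ENNReal NNReal

namespace ExpSumRoots


lemma differentiable_dslope {f : ℂ → ℂ} (hf : Differentiable ℂ f) (a : ℂ) :
    Differentiable ℂ (dslope f a) := by
  intro z
  rcases eq_or_ne z a with rfl | hz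
  · obtain ⟨p, hp⟩ := hf.analyticAt z
    exact (HasFPowerSeriesAt.has_fpower_series_dslope_fslope hp).analyticAt.differentiableAt
  · exact (differentiableAt_dslope_of_ne hz).2 (hf z)

lemma factor_pow {f : ℂ → ℂ} (hf : Differentiable ℂ f) {z₀ w : ℂ}
    (h0 : f z₀ = 0) (hw : f w ≠ 0) :
    ∃ m : ℕ, 0 < m ∧ ∃ g : ℂ → ℂ, Differentiable ℂ g ∧ g z₀ ≠ 0 ∧
      ∀ z, f z = (z - z₀) ^ m * g z := by
  obtain ⟨p, hp⟩ := hf.analyticAt z₀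
  have hpne : p ≠ 0 := by
    intro hp0
    subst hp0
    have hev : ∀ᶠ z in 𝓝 z₀, f z = 0 := hp.locally_zero_iff.mpr rfl
    have hfr : ∃ᶠ z in 𝓝[≠] z₀, f z = 0 :=
      ((hev.filter_mono nhdsWithin_le_nhds).frequently)
    have han : AnalyticOnNhd ℂ f Set.univ := analyticOnNhd_univ_iff_differentiable.mpr hf
    have := han.eqOn_zero_of_preconnected_of_frequently_eq_zero isPreconnected_univ
      (Set.mem_univ z₀) hfr (Set.mem_univ w)
    exact hw this
  have hcoeff0 : p 0 = 0 := by
    have := hp.coeff_zero (fun _ => (1 : ℂ))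
    rw [h0] at this
    refine ContinuousMultilinearMap.ext fun v => ?_
    rw [Subsingleton.elim v fun _ => (1 : ℂ)]
    simpa using this
  have hmpos : 0 < p.order := by
    rcases Nat.eq_zero_or_pos p.order with h | h
    · exact absurd ((p.order_eq_zero_iff hpne).mp h) (by simp [hcoeff0])
    · exact h
  set m := p.order with hm
  have hiter : ∀ k, Differentiable ℂ ((Function.swap dslope z₀)^[k] f) := by
    intro k
    induction k with
    | zero => simpa using hf
    | succ k ih =>
      rw [Function.iterate_succ_apply']
      exact differentiable_dslope ih z₀
  have hval : ∀ k, ((Function.swap dslope z₀)^[k] f) z₀ = p.coeff k := by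
    intro k
    have hk := HasFPowerSeriesAt.has_fpower_series_iterate_dslope_fslope k hp
    have hcz := hk.coeff_zero (fun _ => (1 : ℂ))
    have h2 : (FormalMultilinearSeries.fslope^[k] p).coeff 0 = p.coeff k := by
      rw [FormalMultilinearSeries.coeff_iterate_fslope, Nat.zero_add]
    rw [← hcz]
    exact h2
  have hglobal : ∀ k, k ≤ m → ∀ z, f z = (z - z₀) ^ k * ((Function.swap dslope z₀)^[k] f) z := by
    intro k
    induction k with
    | zero => intro _ z; simp
    | succ k ih =>
      intro hk z
      have hklt : k < m := Nat.lt_of_succ_le hk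
      have h1 := ih (le_of_lt hklt) z
      have h2 : ((Function.swap dslope z₀)^[k] f) z₀ = 0 := by
        rw [hval k]
        have hpk : p k = 0 := p.apply_eq_zero_of_lt_order hklt
        show p k (fun _ => (1 : ℂ)) = 0
        rw [hpk]
        rfl
      have h3 := sub_smul_dslope ((Function.swap dslope z₀)^[k] f) z₀ z
      rw [h2, sub_zero] at h3
      have h4 : ((Function.swap dslope z₀)^[k] f) z
          = (z - z₀) * ((Function.swap dslope z₀)^[k + 1] f) z := by
        rw [Function.iterate_succ_apply']
        rw [← h3]
        simp [Function.swap, smul_eq_mul]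
      rw [h1, h4, pow_succ]
      ring
  refine ⟨m, hmpos, (Function.swap dslope z₀)^[m] f, hiter m, ?_, hglobal m le_rfl⟩
  exact hp.iterate_dslope_fslope_ne_zero hpne

lemma factor_all : ∀ (N : ℕ) (f : ℂ → ℂ), Differentiable ℂ f →
    ∀ (hfin : Set.Finite {z | f z = 0}), hfin.toFinset.card = N →
    ∃ (n : ℕ) (w : Fin n → ℂ) (g : ℂ → ℂ), Differentiable ℂ g ∧ (∀ z, g z ≠ 0) ∧
      ∀ z, f z = (∏ i, (z - w i)) * g z := by
  intro N
  induction N with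
  | zero =>
    intro f hf hfin hcard
    refine ⟨0, Fin.elim0, f, hf, ?_, by intro z; simp⟩
    intro z hz
    have : z ∈ hfin.toFinset := by simpa using hz
    rw [Finset.card_eq_zero.mp hcard] at this
    simp at this
  | succ N ih =>
    intro f hf hfin hcard
    have hne : hfin.toFinset.Nonempty := by
      rw [← Finset.card_pos, hcard]; exact Nat.succ_pos N
    obtain ⟨z₀, hz₀⟩ := hne
    have hz₀' : f z₀ = 0 := by simpa using hz₀
    obtain ⟨wit, hwit⟩ : ∃ w, f w ≠ 0 := by
      have : {z | f z = 0}ᶜ.Infinite := hfin.infinite_compl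
      obtain ⟨w, hw⟩ := this.nonempty
      exact ⟨w, hw⟩
    obtain ⟨m, hm, g₁, hg₁, hg₁z₀, hfac⟩ := factor_pow hf hz₀' hwit
    have hzeroset : {z | g₁ z = 0} = {z | f z = 0} \ {z₀} := by
      ext z
      simp only [Set.mem_setOf_eq, Set.mem_diff, Set.mem_singleton_iff]
      constructor
      · intro hg
        refine ⟨by rw [hfac z, hg, mul_zero], ?_⟩
        rintro rfl; exact hg₁z₀ hg
      · rintro ⟨hfz, hzz⟩
        have := hfac z
        rw [hfz] at this
        have hne' : (z - z₀) ^ m ≠ 0 := pow_ne_zero _ (sub_ne_zero.mpr hzz)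
        exact (mul_eq_zero.mp this.symm).resolve_left hne'
    have hfin₁ : Set.Finite {z | g₁ z = 0} := by
      rw [hzeroset]; exact hfin.diff
    have htf : hfin₁.toFinset = hfin.toFinset.erase z₀ := by
      ext z
      simp [hzeroset, and_comm]
    have hcard₁ : hfin₁.toFinset.card = N := by
      rw [htf, Finset.card_erase_of_mem hz₀, hcard]
      rfl
    obtain ⟨n, w, g, hg, hgz, hfac₁⟩ := ih g₁ hg₁ hfin₁ hcard₁
    refine ⟨m + n, Fin.append (fun _ => z₀) w, g, hg, hgz, ?_⟩
    intro z
    rw [hfac z, hfac₁ z, Fin.prod_univ_add]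
    simp only [Fin.append_left, Fin.append_right]
    rw [Finset.prod_const]
    simp [Finset.card_univ]
    ring



lemma exists_primitive {F : ℂ → ℂ} (hF : Differentiable ℂ F) :
    ∃ H : ℂ → ℂ, Differentiable ℂ H ∧ ∀ z, deriv H z = F z := by
  obtain ⟨p, hp⟩ : ∃ p, HasFPowerSeriesOnBall F p 0 ⊤ :=
    ⟨_, hF.hasFPowerSeriesOnBall 0 (R := 1) one_pos⟩
  have hpr : p.radius = ⊤ := top_le_iff.mp hp.r_le
  set c : ℕ → ℂ := fun n => Nat.rec 0 (fun k _ => p.coeff k / (k + 1)) n with hcdef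
  have hc0 : c 0 = 0 := rfl
  have hcs : ∀ k, c (k + 1) = p.coeff k / (k + 1) := fun k => rfl
  set q := FormalMultilinearSeries.ofScalars ℂ c with hqdef
  have hqnorm : ∀ n, ‖q n‖ = ‖c n‖ := fun n => FormalMultilinearSeries.ofScalars_norm ℂ c n
  have hqr : q.radius = ⊤ := by
    by_contra hne
    obtain ⟨r, hr1, hr2⟩ := ENNReal.lt_iff_exists_nnreal_btwn.mp (lt_top_iff_ne_top.mpr hne)
    obtain ⟨C, hC0, hC⟩ := p.norm_mul_pow_le_of_lt_radius (by rw [hpr]; exact ENNReal.coe_lt_top)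
      (r := r)
    have : (r : ℝ≥0∞) ≤ q.radius := by
      apply q.le_radius_of_bound (C * r + 1)
      intro n
      cases n with
      | zero =>
        rw [hqnorm, hc0]
        have hp1 : (0:ℝ) ≤ C * r + 1 := by positivity
        simpa using hp1
      | succ k =>
        rw [hqnorm, hcs]
        have h1 : ‖p.coeff k / ((k : ℂ) + 1)‖ ≤ ‖p.coeff k‖ := by
          rw [norm_div]
          apply div_le_self (norm_nonneg _)
          rw [show ((k : ℂ) + 1) = ((k + 1 : ℕ) : ℂ) by push_cast; ring]
          rw [Complex.norm_natCast]
          exact_mod_cast Nat.one_le_iff_ne_zero.mpr (Nat.succ_ne_zero k)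
        have h2 : ‖p.coeff k‖ = ‖p k‖ := (p.norm_apply_eq_norm_coef).symm
        have h3 : ‖p.coeff k / ((k : ℂ) + 1)‖ * (r : ℝ) ^ (k + 1)
            ≤ ‖p k‖ * (r : ℝ) ^ k * r := by
          rw [pow_succ]
          rw [← mul_assoc]
          gcongr
          rw [← h2]
          exact h1
        calc ‖p.coeff k / ((k : ℂ) + 1)‖ * (r : ℝ) ^ (k + 1) ≤ ‖p k‖ * (r : ℝ) ^ k * r := h3
          _ ≤ C * r := by gcongr; exact hC k
          _ ≤ C * r + 1 := by linarith
    exact absurd (lt_of_le_of_lt this hr1) (lt_irrefl _)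
  have hq : HasFPowerSeriesOnBall q.sum q 0 ⊤ := by
    have h0 : (0 : ℝ≥0∞) < q.radius := by rw [hqr]; exact ENNReal.zero_lt_top
    have := q.hasFPowerSeriesOnBall h0
    rwa [hqr] at this
  set H := q.sum with hHdef
  have hHdiff : Differentiable ℂ H := by
    intro z
    have hz : z ∈ Metric.eball (0 : ℂ) ⊤ := by simp [edist_lt_top]
    exact (hq.analyticAt_of_mem hz).differentiableAt
  have hd : HasFPowerSeriesOnBall (fderiv ℂ H) q.derivSeries 0 ⊤ := hq.fderiv
  have hderivcont : Continuous (deriv H) := by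
    have h1 : Continuous (fderiv ℂ H) := by
      rw [continuous_iff_continuousAt]
      intro z
      have hz : z ∈ Metric.eball (0 : ℂ) ⊤ := by simp [edist_lt_top]
      exact (hd.analyticAt_of_mem hz).continuousAt
    have h2 : Continuous fun z => (fderiv ℂ H z) (1 : ℂ) :=
      (ContinuousLinearMap.apply ℂ ℂ (1 : ℂ)).continuous.comp h1
    have h3 : deriv H = fun z => (fderiv ℂ H z) (1 : ℂ) := by
      funext z
      exact (fderiv_apply_one_eq_deriv).symm
    rw [h3]
    exact h2
  have heq : ∀ z : ℂ, z ≠ 0 → deriv H z = F z := by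
    intro z hz
    have hmem : z ∈ Metric.eball (0 : ℂ) ⊤ := by simp [edist_lt_top]
    have hsum1 : HasSum (fun n => q.derivSeries n fun _ => z) (fderiv ℂ H (0 + z)) :=
      hd.hasSum hmem
    have hsum1' : HasSum (fun n => (q.derivSeries n fun _ => z) (1 : ℂ))
        ((fderiv ℂ H (0 + z)) (1 : ℂ)) :=
      hsum1.mapL (ContinuousLinearMap.apply ℂ ℂ (1 : ℂ))
    have hterm : ∀ n, (q.derivSeries n fun _ => z) (1 : ℂ) = p.coeff n * z ^ n := by
      intro n
      have hdiag : (q.derivSeries n fun _ => z) z = (n + 1) • (q (n + 1) fun _ => z) :=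
        q.derivSeries_apply_diag n z
      have happ : (q (n + 1) fun _ => z) = c (n + 1) • z ^ (n + 1) :=
        FormalMultilinearSeries.ofScalars_apply_eq c z (n + 1)
      have hlin : (q.derivSeries n fun _ => z) z
          = z * ((q.derivSeries n fun _ => z) (1 : ℂ)) := by
        have : z = z • (1 : ℂ) := by simp
        conv_lhs => rw [this]
        rw [map_smul]
        simp [smul_eq_mul]
      have hne : (z : ℂ) ≠ 0 := hz
      have hnn : ((n : ℂ) + 1) ≠ 0 := Nat.cast_add_one_ne_zero n
      have : z * ((q.derivSeries n fun _ => z) (1 : ℂ))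
          = ((n : ℂ) + 1) * (p.coeff n / ((n : ℂ) + 1)) * z ^ (n + 1) := by
        rw [← hlin, hdiag, happ, hcs]
        push_cast
        simp [smul_eq_mul]
        ring
      have h5 : z * ((q.derivSeries n fun _ => z) (1 : ℂ)) = p.coeff n * z ^ (n + 1) := by
        rw [this]
        field_simp
      have h7 : z * ((q.derivSeries n fun _ => z) (1 : ℂ)) = z * (p.coeff n * z ^ n) := by
        rw [h5, pow_succ]; ring
      exact mul_left_cancel₀ hne h7
    have hsum2 : HasSum (fun n => p n fun _ => z) (F (0 + z)) := hp.hasSum hmem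
    have hfun2 : (fun n => p n fun _ => z) = fun n => p.coeff n * z ^ n := by
      funext n
      rw [p.apply_eq_pow_smul_coeff]
      simp [smul_eq_mul]
      ring
    rw [hfun2] at hsum2
    have hfun1 : (fun n => (q.derivSeries n fun _ => z) (1 : ℂ))
        = fun n => p.coeff n * z ^ n := funext hterm
    rw [hfun1] at hsum1'
    have : (fderiv ℂ H (0 + z)) (1 : ℂ) = F (0 + z) := hsum1'.unique hsum2
    rw [zero_add] at this
    rw [← fderiv_apply_one_eq_deriv]
    exact this
  have hfinal : deriv H = F := by
    apply Continuous.ext_on (dense_compl_singleton (0 : ℂ)) hderivcont hF.continuous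
    intro z hz
    exact heq z hz
  exact ⟨H, hHdiff, fun z => by rw [hfinal]⟩

lemma exists_log {g : ℂ → ℂ} (hg : Differentiable ℂ g) (hne : ∀ z, g z ≠ 0) :
    ∃ h : ℂ → ℂ, Differentiable ℂ h ∧ ∀ z, g z = Complex.exp (h z) := by
  have hderiv : Differentiable ℂ (deriv g) := by
    have h1 : AnalyticOnNhd ℂ g Set.univ := analyticOnNhd_univ_iff_differentiable.mpr hg
    exact analyticOnNhd_univ_iff_differentiable.mp h1.deriv
  have hF : Differentiable ℂ (fun z => deriv g z / g z) := hderiv.div hg hne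
  obtain ⟨H, hH, hH'⟩ := exists_primitive hF
  set h : ℂ → ℂ := fun z => H z - H 0 + Complex.log (g 0) with hhdef
  have hhdiff : Differentiable ℂ h := (hH.sub_const _).add_const _
  have hd : ∀ z, HasDerivAt h (deriv g z / g z) z := by
    intro z
    have := (hH z).hasDerivAt
    rw [hH' z] at this
    exact (this.sub_const _).add_const _
  set φ : ℂ → ℂ := fun z => g z * Complex.exp (-h z) with hφdef
  have hφdiff : Differentiable ℂ φ := hg.mul (hhdiff.neg.cexp)
  have hφd : ∀ z, deriv φ z = 0 := by
    intro z
    have h1 : HasDerivAt g (deriv g z) z := (hg z).hasDerivAt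
    have h2 : HasDerivAt (fun w => -h w) (-(deriv g z / g z)) z := (hd z).neg
    have h3 : HasDerivAt (fun w => Complex.exp (-h w))
        (Complex.exp (-h z) * -(deriv g z / g z)) z := h2.cexp
    have h4 : HasDerivAt φ
        (deriv g z * Complex.exp (-h z)
          + g z * (Complex.exp (-h z) * -(deriv g z / g z))) z := h1.mul h3
    have h5 : deriv g z * Complex.exp (-h z)
        + g z * (Complex.exp (-h z) * -(deriv g z / g z)) = 0 := by
      field_simp [hne z]
      ring
    rw [h5] at h4
    exact h4.deriv
  have hconst : ∀ z, φ z = φ 0 := fun z => is_const_of_deriv_eq_zero hφdiff hφd z 0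
  have hφ0 : φ 0 = 1 := by
    show g 0 * Complex.exp (-(H 0 - H 0 + Complex.log (g 0))) = 1
    rw [sub_self, zero_add, Complex.exp_neg, Complex.exp_log (hne 0)]
    exact mul_inv_cancel₀ (hne 0)
  refine ⟨h, hhdiff, fun z => ?_⟩
  have hc := hconst z
  rw [hφ0] at hc
  have h6 : g z = (Complex.exp (-h z))⁻¹ := by
    apply eq_inv_of_mul_eq_one_left
    simpa [hφdef] using hc
  rw [h6, ← Complex.exp_neg, neg_neg]


lemma affine_of_re_linear {h : ℂ → ℂ} (hh : Differentiable ℂ h) {A B : ℝ}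
    (hA : 0 ≤ A) (hB : 0 ≤ B) (hre : ∀ z, (h z).re ≤ A + B * ‖z‖) :
    ∃ a c : ℂ, ∀ z, h z = a * z + c := by
  have key : ∀ z : ℂ, ‖h z‖ ≤ ‖h 0‖ + 2 * (A + B * (2 * ‖z‖ + 2) + ‖h 0‖ + 1) := by
    intro z
    set R₁ : ℝ := 2 * ‖z‖ + 2 with hR₁
    have hR₁pos : 0 < R₁ := by positivity
    set M : ℝ := A + B * R₁ + ‖h 0‖ + 1 with hM
    have hM1 : 1 ≤ M := by
      have h1 : 0 ≤ B * R₁ := by positivity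
      have h2 := norm_nonneg (h 0)
      nlinarith
    have hMpos : 0 < M := lt_of_lt_of_le one_pos hM1
    set u : ℂ → ℂ := fun w => h w - h 0 with hu
    have hure : ∀ w : ℂ, ‖w‖ < R₁ → (u w).re ≤ M - 1 := by
      intro w hw
      have h1 : (h w).re ≤ A + B * ‖w‖ := hre w
      have h2 : -(‖h 0‖) ≤ (h 0).re := by
        have ha := Complex.abs_re_le_norm (h 0)
        have hb := neg_abs_le ((h 0).re)
        calc -(‖h 0‖) ≤ -|(h 0).re| := by linarith
          _ ≤ (h 0).re := hb
      have h3 : B * ‖w‖ ≤ B * R₁ := mul_le_mul_of_nonneg_left (le_of_lt hw) hB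
      show (h w - h 0).re ≤ M - 1
      rw [Complex.sub_re]
      simp only [hM]
      linarith
    have hdenne : ∀ w : ℂ, ‖w‖ < R₁ → ((2 * M : ℝ) : ℂ) - u w ≠ 0 := by
      intro w hw h0
      have he : (((2 * M : ℝ) : ℂ) - u w).re = 2 * M - (u w).re := by
        simp [Complex.sub_re]
      rw [h0] at he
      simp only [Complex.zero_re] at he
      have := hure w hw
      nlinarith
    set f : ℂ → ℂ := fun w => u w / (((2 * M : ℝ) : ℂ) - u w) with hf
    have hudiff : Differentiable ℂ u := hh.sub_const _
    have hfdiff : DifferentiableOn ℂ f (ball (0 : ℂ) R₁) := by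
      apply DifferentiableOn.div
      · exact hudiff.differentiableOn
      · exact ((differentiable_const _).sub hudiff).differentiableOn
      · intro w hw
        exact hdenne w (by simpa [mem_ball, dist_eq_norm] using hw)
    have hnormlt : ∀ w : ℂ, ‖w‖ < R₁ → ‖u w‖ < ‖((2 * M : ℝ) : ℂ) - u w‖ := by
      intro w hw
      have hx : (u w).re ≤ M - 1 := hure w hw
      have hsq : Complex.normSq (u w) < Complex.normSq (((2 * M : ℝ) : ℂ) - u w) := by
        rw [Complex.normSq_apply, Complex.normSq_apply]
        have hre2 : ((((2 * M : ℝ) : ℂ)) - u w).re = 2 * M - (u w).re := by simp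
        have him2 : ((((2 * M : ℝ) : ℂ)) - u w).im = -(u w).im := by simp
        rw [hre2, him2]
        nlinarith
      have hs := Real.sqrt_lt_sqrt (Complex.normSq_nonneg _) hsq
      rw [Complex.norm_def, Complex.norm_def]
      exact hs
    have hf0 : f 0 = 0 := by
      simp [hf, hu]
    have hmaps : MapsTo f (ball (0 : ℂ) R₁) (ball (f 0) 1) := by
      intro w hw
      rw [hf0, mem_ball, dist_zero_right]
      have hwlt : ‖w‖ < R₁ := by simpa [mem_ball, dist_eq_norm] using hw
      have h1 := hnormlt w hwlt
      have h2 : (0:ℝ) < ‖((2 * M : ℝ) : ℂ) - u w‖ := lt_of_le_of_lt (norm_nonneg _) h1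
      show ‖u w / (((2 * M : ℝ) : ℂ) - u w)‖ < 1
      rw [norm_div, div_lt_one h2]
      exact h1
    have hzball : z ∈ ball (0 : ℂ) R₁ := by
      rw [mem_ball, dist_eq_norm, sub_zero]
      simp only [hR₁]
      linarith
    have hschwarz := Complex.dist_le_div_mul_dist_of_mapsTo_ball hfdiff (hmaps.mono_right ball_subset_closedBall) hzball
    rw [hf0, dist_eq_norm, sub_zero, dist_eq_norm, sub_zero] at hschwarz
    have hfz : ‖f z‖ ≤ 1 / R₁ * ‖z‖ := hschwarz
    have hfz2 : ‖f z‖ ≤ 1 / 2 := by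
      have : 1 / R₁ * ‖z‖ ≤ 1 / 2 := by
        rw [div_mul_eq_mul_div, div_le_div_iff₀ hR₁pos (by norm_num)]
        simp only [hR₁]
        linarith [norm_nonneg z]
      linarith
    have hone : (1:ℝ) / 2 ≤ ‖1 + f z‖ := by
      have h1 : ‖(1:ℂ)‖ ≤ ‖1 + f z‖ + ‖f z‖ := by
        calc ‖(1:ℂ)‖ = ‖(1 + f z) + (-(f z))‖ := by ring_nf
          _ ≤ ‖1 + f z‖ + ‖-(f z)‖ := norm_add_le _ _
          _ = ‖1 + f z‖ + ‖f z‖ := by rw [norm_neg]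
      rw [norm_one] at h1
      linarith
    have hmul : f z * (((2 * M : ℝ) : ℂ) - u z) = u z :=
      div_mul_cancel₀ _ (hdenne z (by simpa [mem_ball, dist_eq_norm] using hzball))
    have hinv : u z * (1 + f z) = ((2 * M : ℝ) : ℂ) * f z := by
      linear_combination -hmul
    have hnorms : ‖u z‖ * ‖1 + f z‖ = 2 * M * ‖f z‖ := by
      have := congrArg norm hinv
      rw [norm_mul, norm_mul] at this
      rw [this]
      congr 1
      rw [Complex.norm_real, Real.norm_eq_abs]
      exact abs_of_pos (by positivity)
    have huz : ‖u z‖ ≤ 2 * M := by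
      have h1 : 2 * M * ‖f z‖ ≤ 2 * M * (1/2) := by
        apply mul_le_mul_of_nonneg_left hfz2 (by positivity)
      have h2 : ‖u z‖ * (1/2) ≤ ‖u z‖ * ‖1 + f z‖ :=
        mul_le_mul_of_nonneg_left hone (norm_nonneg _)
      nlinarith [norm_nonneg (u z)]
    have : ‖h z‖ ≤ ‖h 0‖ + ‖u z‖ := by
      have : h z = u z + h 0 := by simp [hu]
      rw [this]
      calc ‖u z + h 0‖ ≤ ‖u z‖ + ‖h 0‖ := norm_add_le _ _
        _ = ‖h 0‖ + ‖u z‖ := by ring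
    simp only [hM] at huz
    linarith
  -- Step 2: Liouville for the difference quotient
  set φ : ℂ → ℂ := dslope h 0 with hφ
  have hφdiff : Differentiable ℂ φ := differentiable_dslope hh 0
  obtain ⟨K, hK⟩ := (isCompact_closedBall (0:ℂ) 1).exists_bound_of_continuousOn
    hφdiff.continuous.continuousOn
  set C₃ : ℝ := 4 * ‖h 0‖ + 2 * A + 8 * B + 2 with hC₃
  have hbound : ∀ w : ℂ, ‖φ w‖ ≤ max K C₃ := by
    intro w
    rcases le_or_gt ‖w‖ 1 with hw | hw
    · refine le_trans (hK w ?_) (le_max_left _ _)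
      rw [mem_closedBall, dist_eq_norm, sub_zero]
      exact hw
    · have hwne : w ≠ 0 := by
        intro h0
        rw [h0, norm_zero] at hw
        linarith
      have hφw : φ w = (h w - h 0) / w := by
        rw [hφ, dslope_of_ne _ hwne]
        simp [slope, div_eq_inv_mul]
      refine le_trans ?_ (le_max_right _ _)
      rw [hφw, norm_div]
      have hwpos : (0:ℝ) < ‖w‖ := by linarith
      rw [div_le_iff₀ hwpos]
      have h1 : ‖h w - h 0‖ ≤ ‖h w‖ + ‖h 0‖ := norm_sub_le _ _
      have h2 := key w
      have h3 : ‖h w‖ + ‖h 0‖ ≤ 4 * ‖h 0‖ + 2 * A + 4 * B + 2 + 4 * B * ‖w‖ := by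
        nlinarith
      have h4 : 4 * ‖h 0‖ + 2 * A + 4 * B + 2 + 4 * B * ‖w‖ ≤ C₃ * ‖w‖ := by
        simp only [hC₃]
        nlinarith [norm_nonneg (h 0)]
      linarith
  have hbd : Bornology.IsBounded (Set.range φ) := by
    rw [isBounded_iff_forall_norm_le]
    exact ⟨max K C₃, by rintro x ⟨w, rfl⟩; exact hbound w⟩
  obtain ⟨a, ha⟩ := hφdiff.exists_eq_const_of_bounded hbd
  refine ⟨a, h 0, fun z => ?_⟩
  have h5 := sub_smul_dslope h 0 z
  rw [sub_zero] at h5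
  have h6 : φ z = a := by rw [ha]; rfl
  rw [← hφ] at h5
  rw [h6] at h5
  have : h z = z * a + h 0 := by
    rw [smul_eq_mul] at h5
    linear_combination -h5
  rw [this]
  ring

lemma poly_exp_decay (d : ℕ) {β : ℝ} (hβ : 0 < β) :
    Tendsto (fun t : ℝ => t ^ d * Real.exp (-(β * t))) atTop (𝓝 0) := by
  have h1 := Real.tendsto_pow_mul_exp_neg_atTop_nhds_zero d
  have h2 : Tendsto (fun t : ℝ => β * t) atTop atTop :=
    Tendsto.const_mul_atTop hβ tendsto_id
  have h3 := (h1.comp h2).mul_const ((β ^ d)⁻¹)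
  rw [zero_mul] at h3
  apply h3.congr
  intro t
  have hβd : (β : ℝ) ^ d ≠ 0 := by positivity
  simp only [Function.comp_apply]
  field_simp
  ring

end ExpSumRoots

open ExpSumRoots

/-- An exponential sum `Φ(ρ) = ∑_{j=0}^J b_j e^{ρ B_j}` with real exponents
`B₀ = 0 < B₁ < ⋯ < B_J`, `b₀ ≠ 0`, `b_J ≠ 0` and `J ≥ 1` has infinitely many
zeros in the complex plane (hence a stratified N-layer medium has infinitely
many natural modes). -/
theorem exponential_sum_infinitely_many_roots
    (J : ℕ) (hJ : 1 ≤ J) (B : ℕ → ℝ) (b : ℕ → ℂ)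
    (hB0 : B 0 = 0) (hBmono : ∀ i, i < J → B i < B (i + 1))
    (hb0 : b 0 ≠ 0) (hbJ : b J ≠ 0) :
    {ρ : ℂ | (∑ j ∈ Finset.range (J + 1), b j * Complex.exp (ρ * (B j : ℂ))) = 0}.Infinite := by
  by_contra hcon
  have hfin : Set.Finite {ρ : ℂ |
      (∑ j ∈ Finset.range (J + 1), b j * Complex.exp (ρ * (B j : ℂ))) = 0} :=
    Set.not_infinite.mp hcon
  -- notation
  have hchain : ∀ j, j ≤ J → ∀ i, i < j → B i < B j := by
    intro j
    induction j with
    | zero => intro _ i hi; omega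
    | succ k ih =>
      intro hk i hi
      have hkJ : k < J := Nat.lt_of_succ_le hk
      rcases Nat.lt_succ_iff_lt_or_eq.mp hi with hik | rfl
      · exact lt_trans (ih (le_of_lt hkJ) i hik) (hBmono k hkJ)
      · exact hBmono i hkJ
  have hBJpos : 0 < B J := by
    have := hchain J le_rfl 0 (Nat.lt_of_lt_of_le Nat.zero_lt_one hJ)
    rwa [hB0] at this
  have hBnonneg : ∀ j, j ≤ J → 0 ≤ B j := by
    intro j hj
    rcases Nat.eq_zero_or_pos j with rfl | hjpos
    · rw [hB0]
    · exact le_of_lt (by have := hchain j hj 0 hjpos; rwa [hB0] at this)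
  have hBle : ∀ j, j ≤ J → B j ≤ B J := by
    intro j hj
    rcases eq_or_lt_of_le hj with rfl | hlt
    · exact le_rfl
    · exact le_of_lt (hchain J le_rfl j hlt)
  set Φ : ℂ → ℂ := fun z => ∑ j ∈ Finset.range (J + 1), b j * Complex.exp (z * (B j : ℂ))
    with hΦdef
  have hΦdiff : Differentiable ℂ Φ := by
    apply Differentiable.fun_sum
    intro j _
    exact ((differentiable_id.mul_const _).cexp).const_mul _
  have hfinΦ : Set.Finite {z : ℂ | Φ z = 0} := hfin
  obtain ⟨n, w, g, hg, hgne, hfac⟩ :=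
    factor_all hfinΦ.toFinset.card Φ hΦdiff hfinΦ rfl
  obtain ⟨h₁, hh₁, hexp⟩ := exists_log hg hgne
  -- global bound on Φ
  set C : ℝ := ∑ j ∈ Finset.range (J + 1), ‖b j‖ with hCdef
  have hCpos : 0 < C := by
    have h1 : ‖b 0‖ ≤ C := by
      apply Finset.single_le_sum (f := fun j => ‖b j‖) (fun i _ => norm_nonneg _)
      simp
    have h2 : 0 < ‖b 0‖ := norm_pos_iff.mpr hb0
    linarith
  have hΦle : ∀ z : ℂ, ‖Φ z‖ ≤ C * Real.exp (B J * ‖z‖) := by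
    intro z
    calc ‖Φ z‖ ≤ ∑ j ∈ Finset.range (J + 1), ‖b j * Complex.exp (z * (B j : ℂ))‖ :=
          norm_sum_le _ _
      _ ≤ ∑ j ∈ Finset.range (J + 1), ‖b j‖ * Real.exp (B J * ‖z‖) := by
          apply Finset.sum_le_sum
          intro j hj
          rw [norm_mul, Complex.norm_exp]
          apply mul_le_mul_of_nonneg_left _ (norm_nonneg _)
          apply Real.exp_le_exp.mpr
          have hre : (z * (B j : ℂ)).re = z.re * B j := by
            simp [Complex.mul_re]
          rw [hre]
          have hjJ : j ≤ J := by
            have := Finset.mem_range.mp hj; omega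
          have h1 : z.re ≤ ‖z‖ := by
            have := Complex.abs_re_le_norm z
            exact (le_abs_self _).trans this
          have h2 : z.re * B j ≤ ‖z‖ * B j :=
            mul_le_mul_of_nonneg_right h1 (hBnonneg j hjJ)
          have h3 : ‖z‖ * B j ≤ ‖z‖ * B J :=
            mul_le_mul_of_nonneg_left (hBle j hjJ) (norm_nonneg _)
          calc z.re * B j ≤ ‖z‖ * B j := h2
            _ ≤ ‖z‖ * B J := h3
            _ = B J * ‖z‖ := mul_comm _ _
      _ = C * Real.exp (B J * ‖z‖) := by rw [← Finset.sum_mul]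
  -- lower bound region for the polynomial factor
  set R₀ : ℝ := 1 + ∑ i : Fin n, ‖w i‖ with hR₀def
  have hR₀1 : 1 ≤ R₀ := by
    have : (0:ℝ) ≤ ∑ i : Fin n, ‖w i‖ :=
      Finset.sum_nonneg fun i _ => norm_nonneg _
    simp only [hR₀def]; linarith
  have hwle : ∀ i, ‖w i‖ ≤ R₀ - 1 := by
    intro i
    have := Finset.single_le_sum (f := fun i => ‖w i‖) (fun i _ => norm_nonneg _)
      (Finset.mem_univ i)
    simp only [hR₀def]; linarith
  have hQge1 : ∀ z : ℂ, R₀ ≤ ‖z‖ → 1 ≤ ‖∏ i, (z - w i)‖ := by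
    intro z hz
    rw [norm_prod]
    have h1 : ∀ i ∈ (Finset.univ : Finset (Fin n)), (1:ℝ) ≤ ‖z - w i‖ := by
      intro i _
      have h2 : ‖z‖ - ‖w i‖ ≤ ‖z - w i‖ := norm_sub_norm_le _ _
      have := hwle i
      linarith
    have := Finset.prod_le_prod (f := fun _ : Fin n => (1:ℝ))
      (g := fun i => ‖z - w i‖) (fun i _ => zero_le_one) h1
    simpa using this
  have hQle : ∀ t : ℝ, R₀ ≤ |t| → ‖∏ i, ((t:ℂ) - w i)‖ ≤ (2 * |t|) ^ n := by
    intro t ht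
    rw [norm_prod]
    have h1 : ∀ i ∈ (Finset.univ : Finset (Fin n)), ‖(t:ℂ) - w i‖ ≤ 2 * |t| := by
      intro i _
      have h2 : ‖(t:ℂ) - w i‖ ≤ ‖(t:ℂ)‖ + ‖w i‖ := norm_sub_le _ _
      have h3 : ‖(t:ℂ)‖ = |t| := by rw [Complex.norm_real, Real.norm_eq_abs]
      have := hwle i
      rw [h3] at h2
      linarith
    have := Finset.prod_le_prod (f := fun i => ‖(t:ℂ) - w i‖)
      (g := fun _ => 2 * |t|) (fun i _ => norm_nonneg _) h1
    simpa [Finset.prod_const] using this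
  -- growth bound on `re h₁`
  obtain ⟨K, hK⟩ := (isCompact_closedBall (0:ℂ) R₀).exists_bound_of_continuousOn
    hh₁.continuous.continuousOn
  set A : ℝ := max (max (Real.log C) K) 0 with hAdef
  have hA0 : 0 ≤ A := le_max_right _ _
  have hre : ∀ z, (h₁ z).re ≤ A + B J * ‖z‖ := by
    intro z
    have hnn : 0 ≤ B J * ‖z‖ := mul_nonneg hBJpos.le (norm_nonneg _)
    rcases le_or_gt ‖z‖ R₀ with hz | hz
    · have h1 : ‖h₁ z‖ ≤ K := hK z (by rwa [mem_closedBall, dist_zero_right])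
      have h2 : (h₁ z).re ≤ ‖h₁ z‖ := by
        have := Complex.abs_re_le_norm (h₁ z)
        exact (le_abs_self _).trans this
      have h3 : K ≤ A := le_trans (le_max_right _ _) (le_max_left _ _)
      linarith
    · have h1 : ‖g z‖ ≤ ‖Φ z‖ := by
        rw [hfac z, norm_mul]
        have := hQge1 z (le_of_lt hz)
        nlinarith [norm_nonneg (g z)]
      have h2 : ‖g z‖ = Real.exp ((h₁ z).re) := by
        rw [hexp z, Complex.norm_exp]
      have h3 : Real.exp ((h₁ z).re) ≤ C * Real.exp (B J * ‖z‖) := by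
        rw [← h2]
        exact le_trans h1 (hΦle z)
      have h4 := Real.log_le_log (Real.exp_pos _) h3
      rw [Real.log_exp, Real.log_mul (ne_of_gt hCpos) (Real.exp_ne_zero _),
        Real.log_exp] at h4
      have h5 : Real.log C ≤ A := le_trans (le_max_left _ _) (le_max_left _ _)
      linarith
  obtain ⟨a, c, hac⟩ := affine_of_re_linear hh₁ hA0 hBJpos.le hre
  -- norm formula on the real axis
  have hnormΦ : ∀ t : ℝ,
      ‖Φ (t:ℂ)‖ = ‖∏ i, ((t:ℂ) - w i)‖ * Real.exp (a.re * t + c.re) := by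
    intro t
    rw [hfac ((t:ℂ)), norm_mul]
    congr 1
    rw [hexp ((t:ℂ)), hac ((t:ℂ)), Complex.norm_exp]
    congr 1
    simp [Complex.add_re, Complex.mul_re]
  -- limit along the negative real axis
  have E1 : Tendsto (fun t : ℝ => Φ (t:ℂ)) atBot (𝓝 (b 0)) := by
    have hterm : ∀ j ∈ Finset.range (J + 1),
        Tendsto (fun t : ℝ => b j * Complex.exp ((t:ℂ) * (B j : ℂ))) atBot
          (𝓝 (if j = 0 then b 0 else 0)) := by
      intro j hj
      by_cases hj0 : j = 0
      · subst hj0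
        rw [if_pos rfl]
        have : (fun t : ℝ => b 0 * Complex.exp ((t:ℂ) * ((B 0 : ℝ) : ℂ)))
            = fun _ => b 0 := by
          funext t; rw [hB0]; simp
        rw [this]
        exact tendsto_const_nhds
      · rw [if_neg hj0]
        have hjJ : j ≤ J := by have := Finset.mem_range.mp hj; omega
        have hBj : 0 < B j := by
          have := hchain j hjJ 0 (Nat.pos_of_ne_zero hj0)
          rwa [hB0] at this
        rw [tendsto_zero_iff_norm_tendsto_zero]
        have hnorm : (fun t : ℝ => ‖b j * Complex.exp ((t:ℂ) * (B j : ℂ))‖)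
            = fun t : ℝ => ‖b j‖ * Real.exp (t * B j) := by
          funext t
          rw [norm_mul, Complex.norm_exp]
          congr 2
          simp [Complex.mul_re]
        rw [hnorm]
        have h1 : Tendsto (fun t : ℝ => t * B j) atBot atBot :=
          Tendsto.atBot_mul_const hBj tendsto_id
        have h2 : Tendsto (fun t : ℝ => Real.exp (t * B j)) atBot (𝓝 0) :=
          Real.tendsto_exp_atBot.comp h1
        have h3 := h2.const_mul ‖b j‖
        rwa [mul_zero] at h3
    have := tendsto_finset_sum _ hterm
    have hsum : (∑ j ∈ Finset.range (J + 1), if j = 0 then b 0 else 0) = b 0 := by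
      rw [Finset.sum_ite_eq' (Finset.range (J + 1)) 0 (fun _ => b 0)]
      simp
    rwa [hsum] at this
  -- limit along the positive real axis
  have E2 : Tendsto (fun t : ℝ => Φ (t:ℂ) * Complex.exp (-((t:ℂ) * (B J : ℂ)))) atTop
      (𝓝 (b J)) := by
    have hrw : (fun t : ℝ => Φ (t:ℂ) * Complex.exp (-((t:ℂ) * (B J : ℂ))))
        = fun t : ℝ => ∑ j ∈ Finset.range (J + 1),
            b j * Complex.exp ((t:ℂ) * (((B j : ℝ) - B J : ℝ) : ℂ)) := by
      funext t
      rw [hΦdef]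
      simp only []
      rw [Finset.sum_mul]
      apply Finset.sum_congr rfl
      intro j hj
      rw [mul_assoc, ← Complex.exp_add]
      congr 1
      push_cast
      ring
    rw [hrw]
    have hterm : ∀ j ∈ Finset.range (J + 1),
        Tendsto (fun t : ℝ => b j * Complex.exp ((t:ℂ) * (((B j : ℝ) - B J : ℝ) : ℂ)))
          atTop (𝓝 (if j = J then b J else 0)) := by
      intro j hj
      by_cases hjJ : j = J
      · subst hjJ
        rw [if_pos rfl]
        have : (fun t : ℝ => b j * Complex.exp ((t:ℂ) * (((B j : ℝ) - B j : ℝ) : ℂ)))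
            = fun _ => b j := by
          funext t; simp
        rw [this]
        exact tendsto_const_nhds
      · rw [if_neg hjJ]
        have hjlt : j < J := by have := Finset.mem_range.mp hj; omega
        have hδ : B j - B J < 0 := sub_neg.mpr (hchain J le_rfl j hjlt)
        rw [tendsto_zero_iff_norm_tendsto_zero]
        have hnorm : (fun t : ℝ => ‖b j * Complex.exp ((t:ℂ) * (((B j : ℝ) - B J : ℝ) : ℂ))‖)
            = fun t : ℝ => ‖b j‖ * Real.exp (t * (B j - B J)) := by
          funext t
          rw [norm_mul, Complex.norm_exp]
          congr 2
          simp [Complex.mul_re]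
        rw [hnorm]
        have h1 : Tendsto (fun t : ℝ => t * (B J - B j)) atTop atTop :=
          Tendsto.atTop_mul_const (by linarith) tendsto_id
        have h2 : Tendsto (fun t : ℝ => -(t * (B J - B j))) atTop atBot :=
          tendsto_neg_atTop_atBot.comp h1
        have h3 : Tendsto (fun t : ℝ => t * (B j - B J)) atTop atBot := by
          apply h2.congr
          intro t; ring
        have h4 : Tendsto (fun t : ℝ => Real.exp (t * (B j - B J))) atTop (𝓝 0) :=
          Real.tendsto_exp_atBot.comp h3
        have h5 := h4.const_mul ‖b j‖
        rwa [mul_zero] at h5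
    have := tendsto_finset_sum _ hterm
    have hsum : (∑ j ∈ Finset.range (J + 1), if j = J then b J else 0) = b J := by
      rw [Finset.sum_ite_eq' (Finset.range (J + 1)) J (fun _ => b J)]
      simp
    rwa [hsum] at this
  -- derive the contradiction
  by_cases hpos : 0 < a.re
  · -- contradiction at -∞
    have l1 : Tendsto (fun t : ℝ => ‖Φ (t:ℂ)‖) atBot (𝓝 ‖b 0‖) := E1.norm
    have G0 : Tendsto (fun u : ℝ => (2*u)^n * (Real.exp c.re * Real.exp (-(a.re * u))))
        atTop (𝓝 0) := by
      have h1 := poly_exp_decay n hpos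
      have h2 := h1.const_mul ((2:ℝ)^n * Real.exp c.re)
      rw [mul_zero] at h2
      apply h2.congr
      intro u
      rw [mul_pow]
      ring
    have l2 : Tendsto (fun t : ℝ => ‖Φ (t:ℂ)‖) atBot (𝓝 0) := by
      apply squeeze_zero' (Eventually.of_forall fun t => norm_nonneg _)
        (g := fun t : ℝ => (2*|t|)^n * (Real.exp c.re * Real.exp (a.re * t)))
      · filter_upwards [eventually_le_atBot (-R₀)] with t ht
        have htneg : t ≤ 0 := by linarith
        have htabs : R₀ ≤ |t| := by
          rw [_root_.abs_of_nonpos htneg]; linarith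
        rw [hnormΦ t]
        have h1 := hQle t htabs
        have h2 : Real.exp (a.re * t + c.re) = Real.exp c.re * Real.exp (a.re * t) := by
          rw [← Real.exp_add]; ring_nf
        rw [h2]
        have h3 : (0:ℝ) ≤ Real.exp c.re * Real.exp (a.re * t) := by positivity
        nlinarith [norm_nonneg (∏ i, ((t:ℂ) - w i))]
      · have hcomp := G0.comp tendsto_neg_atBot_atTop
        apply hcomp.congr'
        filter_upwards [eventually_le_atBot (0:ℝ)] with t ht
        have : |t| = -t := _root_.abs_of_nonpos ht
        simp only [Function.comp]
        rw [this]
        ring_nf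
    have := tendsto_nhds_unique l1 l2
    exact hb0 (norm_eq_zero.mp this)
  · -- contradiction at +∞
    push_neg at hpos
    have hβ : 0 < B J - a.re := by linarith
    have l1 : Tendsto (fun t : ℝ => ‖Φ (t:ℂ)‖ * Real.exp (-(B J * t))) atTop
        (𝓝 ‖b J‖) := by
      have h1 := E2.norm
      apply h1.congr
      intro t
      rw [norm_mul, Complex.norm_exp]
      congr 2
      simp [Complex.mul_re]
      ring
    have G0 : Tendsto (fun t : ℝ => (2*t)^n * (Real.exp c.re * Real.exp (-((B J - a.re) * t))))
        atTop (𝓝 0) := by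
      have h1 := poly_exp_decay n hβ
      have h2 := h1.const_mul ((2:ℝ)^n * Real.exp c.re)
      rw [mul_zero] at h2
      apply h2.congr
      intro u
      rw [mul_pow]
      ring
    have l2 : Tendsto (fun t : ℝ => ‖Φ (t:ℂ)‖ * Real.exp (-(B J * t))) atTop (𝓝 0) := by
      apply squeeze_zero' (Eventually.of_forall fun t => by positivity)
        (g := fun t : ℝ => (2*t)^n * (Real.exp c.re * Real.exp (-((B J - a.re) * t))))
      · filter_upwards [eventually_ge_atTop (max R₀ 1)] with t ht
        have ht1 : R₀ ≤ t := le_trans (le_max_left _ _) ht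
        have ht0 : 0 ≤ t := by linarith
        have htabs : R₀ ≤ |t| := by rwa [_root_.abs_of_nonneg ht0]
        rw [hnormΦ t]
        have h1 := hQle t htabs
        rw [_root_.abs_of_nonneg ht0] at h1
        have h2 : Real.exp (a.re * t + c.re) * Real.exp (-(B J * t))
            = Real.exp c.re * Real.exp (-((B J - a.re) * t)) := by
          rw [← Real.exp_add, ← Real.exp_add]
          ring_nf
        rw [mul_assoc, h2]
        have h3 : (0:ℝ) ≤ Real.exp c.re * Real.exp (-((B J - a.re) * t)) := by positivity
        nlinarith [norm_nonneg (∏ i, ((t:ℂ) - w i))]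
      · exact G0
    have := tendsto_nhds_unique l1 l2
    exact hbJ (norm_eq_zero.mp this)
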